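/- arXiv:1305.1079 — 3 statements merged into one kernel-verified Lean document; each statement's English description precedes it below -/
import Mathlib

section
/- Suppose G(s) = C(sI−A)⁻¹B has a minimal block-structured realization with A = blkdiag(A₁, 0_{n₂×n₂}, A₃), A₁ nonsingular, A₃ = [[0, I_k],[0,0]]. Then the matrix [C₂ C₃ₐ] has full column rank, the matrix [B₂; B₃ᵦ] has full row rank, m ≥ k + n₂, and the subsystem realization (A₁, B₁, C₁) is minimal (i.e., (A₁,B₁) is controllable and (A₁,C₁) is observable). -/
open Matrix Filter
open scoped Topology ComplexOrder

noncomputable section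

namespace NIPaper

/-- A square `m × m` real-rational transfer function matrix. -/
abbrev TF (m : ℕ) := Matrix (Fin m) (Fin m) (RatFunc ℝ)

/-- Complex evaluation of a real-rational transfer function matrix. -/
def evalTF {m : ℕ} (G : TF m) (s : ℂ) : Matrix (Fin m) (Fin m) ℂ :=
  fun i j => (G i j).eval (algebraMap ℝ ℂ) s

/-- Real evaluation of a real-rational transfer function matrix. -/
def evalTFR {m : ℕ} (G : TF m) (x : ℝ) : Matrix (Fin m) (Fin m) ℝ :=
  fun i j => (G i j).eval (RingHom.id ℝ) x

/-- `s ∈ ℂ` is a pole of the transfer function matrix `G`. -/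
def IsPoleAt {m : ℕ} (G : TF m) (s : ℂ) : Prop :=
  ∃ i j, ((G i j).denom.map (algebraMap ℝ ℂ)).IsRoot s

/-- `G` is strictly proper. -/
def StrictlyProper {m : ℕ} (G : TF m) : Prop :=
  ∀ i j, (G i j).num.degree < (G i j).denom.degree

/-- `G` is negative imaginary (Definition 2 of the paper, allowing poles at the origin). -/
def IsNI {m : ℕ} (G : TF m) : Prop :=
  (∀ s : ℂ, 0 < s.re → ¬ IsPoleAt G s) ∧
  (∀ ω : ℝ, 0 < ω → ¬ IsPoleAt G (Complex.I * ω) →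
    (Complex.I • (evalTF G (Complex.I * ω) - (evalTF G (Complex.I * ω))ᴴ)).PosSemidef) ∧
  (∀ ω : ℝ, 0 < ω → IsPoleAt G (Complex.I * ω) →
    (∀ i j, ((G i j).denom.map (algebraMap ℝ ℂ)).rootMultiplicity (Complex.I * ω) ≤ 1) ∧
    ∃ K : Matrix (Fin m) (Fin m) ℂ,
      Tendsto (fun s : ℂ => (s - Complex.I * ω) • Complex.I • evalTF G s)
        (𝓝[≠] (Complex.I * (ω : ℂ))) (𝓝 K) ∧ K.PosSemidef) ∧
  (IsPoleAt G 0 →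
    (∀ k : ℕ, 3 ≤ k →
      Tendsto (fun s : ℂ => s ^ k • evalTF G s) (𝓝[≠] (0 : ℂ)) (𝓝 0)) ∧
    ∃ K : Matrix (Fin m) (Fin m) ℂ,
      Tendsto (fun s : ℂ => s ^ 2 • evalTF G s) (𝓝[≠] (0 : ℂ)) (𝓝 K) ∧ K.PosSemidef)

/-- `G` is strictly negative imaginary. -/
def IsSNI {m : ℕ} (G : TF m) : Prop :=
  (∀ s : ℂ, 0 ≤ s.re → ¬ IsPoleAt G s) ∧
  (∀ ω : ℝ, 0 < ω →
    (Complex.I • (evalTF G (Complex.I * ω) - (evalTF G (Complex.I * ω))ᴴ)).PosDef)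

/-- `R` is positive real. -/
def IsPR {m : ℕ} (R : TF m) : Prop :=
  (∀ s : ℂ, 0 < s.re → ¬ IsPoleAt R s) ∧
  (∀ ω : ℝ, ¬ IsPoleAt R (Complex.I * ω) →
    (evalTF R (Complex.I * ω) + (evalTF R (Complex.I * ω))ᴴ).PosSemidef) ∧
  (∀ ω : ℝ, IsPoleAt R (Complex.I * ω) →
    ∃ K : Matrix (Fin m) (Fin m) ℂ,
      Tendsto (fun s : ℂ => (s - Complex.I * ω) • evalTF R s)
        (𝓝[≠] (Complex.I * (ω : ℂ))) (𝓝 K) ∧ K.PosSemidef)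

/-- `G₂ = lim_{s→0} s² G(s)` (a real matrix, stated via its complex image). -/
def IsG2 {m : ℕ} (G : TF m) (G2 : Matrix (Fin m) (Fin m) ℝ) : Prop :=
  Tendsto (fun s : ℂ => s ^ 2 • evalTF G s) (𝓝[≠] (0 : ℂ))
    (𝓝 (G2.map (algebraMap ℝ ℂ)))

/-- `G₁ = lim_{s→0} s (G(s) - G₂/s²)`. -/
def IsG1 {m : ℕ} (G : TF m) (G2 G1 : Matrix (Fin m) (Fin m) ℝ) : Prop :=
  Tendsto (fun s : ℂ => s • (evalTF G s - (s ^ 2)⁻¹ • G2.map (algebraMap ℝ ℂ)))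
    (𝓝[≠] (0 : ℂ)) (𝓝 (G1.map (algebraMap ℝ ℂ)))

/-- `G₀ = lim_{s→0} (G(s) - G₂/s² - G₁/s)`. -/
def IsG0 {m : ℕ} (G : TF m) (G2 G1 G0 : Matrix (Fin m) (Fin m) ℝ) : Prop :=
  Tendsto (fun s : ℂ =>
      evalTF G s - (s ^ 2)⁻¹ • G2.map (algebraMap ℝ ℂ) - s⁻¹ • G1.map (algebraMap ℝ ℂ))
    (𝓝[≠] (0 : ℂ)) (𝓝 (G0.map (algebraMap ℝ ℂ)))

/-- `(A,B)` is controllable: the controllability matrix `[B AB ⋯ A^{n-1}B]` has full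
row rank, expressed via triviality of its left kernel. -/
def Controllable {n m : Type*} [Fintype n] [DecidableEq n] [Fintype m]
    (A : Matrix n n ℝ) (B : Matrix n m ℝ) : Prop :=
  ∀ x : n → ℝ, (∀ k < Fintype.card n, x ᵥ* (A ^ k * B) = 0) → x = 0

/-- `(A,C)` is observable: the observability matrix `[C; CA; ⋯; CA^{n-1}]` has full
column rank, expressed via triviality of its kernel. -/
def Observable {n p : Type*} [Fintype n] [DecidableEq n] [Fintype p]
    (A : Matrix n n ℝ) (C : Matrix p n ℝ) : Prop :=
  ∀ x : n → ℝ, (∀ k < Fintype.card n, (C * A ^ k) *ᵥ x = 0) → x = 0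

/-- A realization `(A,B,C)` is minimal. -/
def Minimal {n m p : Type*} [Fintype n] [DecidableEq n] [Fintype m] [Fintype p]
    (A : Matrix n n ℝ) (B : Matrix n m ℝ) (C : Matrix p n ℝ) : Prop :=
  Controllable A B ∧ Observable A C

/-- `(A,B,C,D)` is a state-space realization of `G`, i.e. `G(s) = C (sI - A)⁻¹ B + D`. -/
def IsRealization {m : ℕ} {n : Type*} [Fintype n] [DecidableEq n] (G : TF m)
    (A : Matrix n n ℝ) (B : Matrix n (Fin m) ℝ) (C : Matrix (Fin m) n ℝ)
    (D : Matrix (Fin m) (Fin m) ℝ) : Prop :=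
  ∀ s : ℂ, IsUnit (s • (1 : Matrix n n ℂ) - A.map (algebraMap ℝ ℂ)) →
    evalTF G s =
      C.map (algebraMap ℝ ℂ) * (s • (1 : Matrix n n ℂ) - A.map (algebraMap ℝ ℂ))⁻¹ *
        B.map (algebraMap ℝ ℂ) + D.map (algebraMap ℝ ℂ)

/-- A real square matrix is Hurwitz if each of its eigenvalues has negative real part. -/
def IsHurwitz {n : Type*} [Fintype n] [DecidableEq n] (M : Matrix n n ℝ) : Prop :=
  ∀ μ ∈ spectrum ℂ (M.map (algebraMap ℝ ℂ)), μ.re < 0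

/-- The closed-loop system matrix `Ă` of the positive-feedback interconnection of a
strictly proper plant `(A,B,C)` and a controller `(Ā,B̄,C̄,D̄)`. -/
def closedLoop {m : ℕ} {n nb : Type*} [Fintype n] [Fintype nb]
    (A : Matrix n n ℝ) (B : Matrix n (Fin m) ℝ) (C : Matrix (Fin m) n ℝ)
    (Ab : Matrix nb nb ℝ) (Bb : Matrix nb (Fin m) ℝ) (Cb : Matrix (Fin m) nb ℝ)
    (Db : Matrix (Fin m) (Fin m) ℝ) : Matrix (n ⊕ nb) (n ⊕ nb) ℝ :=
  Matrix.fromBlocks (A + B * Db * C) (B * Cb) (Bb * C) Ab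

/-- `𝒫(X,Y) = X - X Y (Yᵀ X Y)⁻¹ Yᵀ X`. -/
def Pfun {m : ℕ} {r : Type*} [Fintype r] [DecidableEq r]
    (X : Matrix (Fin m) (Fin m) ℝ) (Y : Matrix (Fin m) r ℝ) : Matrix (Fin m) (Fin m) ℝ :=
  X - X * Y * (Yᵀ * X * Y)⁻¹ * Yᵀ * X

end NIPaper

namespace NIPaper

private lemma vecMul_finset_sum {n m : Type*} [Fintype n] {ι : Type*} (s : Finset ι)
    (x : n → ℝ) (N : ι → Matrix n m ℝ) :
    x ᵥ* (∑ i ∈ s, N i) = ∑ i ∈ s, x ᵥ* N i := by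
  ext c
  simp only [Matrix.vecMul, dotProduct, Matrix.sum_apply, Finset.mul_sum,
    Finset.sum_apply]
  exact Finset.sum_comm

private lemma vecMul_smul_mat {n m : Type*} [Fintype n] (x : n → ℝ) (c : ℝ)
    (N : Matrix n m ℝ) : x ᵥ* (c • N) = c • (x ᵥ* N) := by
  ext j
  simp [Matrix.vecMul, dotProduct, Finset.mul_sum, mul_left_comm]

private lemma vecMul_pow_mul_eq_zero {n : ℕ} {m : Type*} [Fintype m]
    (M : Matrix (Fin n) (Fin n) ℝ) (B : Matrix (Fin n) m ℝ) (x : Fin n → ℝ)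
    (h : ∀ j < n, x ᵥ* (M ^ j * B) = 0) (j : ℕ) : x ᵥ* (M ^ j * B) = 0 := by
  rcases Nat.eq_zero_or_pos n with hn | hn
  · subst hn
    ext i
    simp [Matrix.vecMul, dotProduct]
  · have hq : (Polynomial.X ^ j %ₘ M.charpoly).natDegree < n := by
      rcases eq_or_ne (Polynomial.X ^ j %ₘ M.charpoly) 0 with h0 | h0
      · simpa [h0] using hn
      · rw [Polynomial.natDegree_lt_iff_degree_lt h0]
        have := Polynomial.degree_modByMonic_lt (Polynomial.X ^ j) M.charpoly_monic
        rwa [M.charpoly_degree_eq_dim, Fintype.card_fin] at this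
    have hMj : M ^ j = ∑ i ∈ Finset.range n, (Polynomial.X ^ j %ₘ M.charpoly).coeff i • M ^ i := by
      rw [Matrix.pow_eq_aeval_mod_charpoly, Polynomial.aeval_eq_sum_range' hq]
    rw [hMj, Matrix.sum_mul, vecMul_finset_sum]
    refine Finset.sum_eq_zero fun i hi => ?_
    rw [Matrix.smul_mul, vecMul_smul_mat, h i (Finset.mem_range.mp hi), smul_zero]

private lemma fromBlocks_diag_pow {p q : Type*} [Fintype p] [Fintype q] [DecidableEq p]
    [DecidableEq q] (A : Matrix p p ℝ) (D : Matrix q q ℝ) (j : ℕ) :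
    (Matrix.fromBlocks A 0 0 D) ^ j = Matrix.fromBlocks (A ^ j) 0 0 (D ^ j) := by
  induction j with
  | zero => simp [Matrix.fromBlocks_one]
  | succ j ih => rw [pow_succ, pow_succ, pow_succ, ih, Matrix.fromBlocks_multiply]; simp

private lemma rank_eq_card_of_ker {m n : Type*} [Fintype m] [Fintype n] [DecidableEq n]
    (M : Matrix m n ℝ) (h : ∀ x, M *ᵥ x = 0 → x = 0) : M.rank = Fintype.card n := by
  have hinj : Function.Injective M.mulVecLin := by
    rw [← LinearMap.ker_eq_bot, LinearMap.ker_eq_bot']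
    intro x hx
    exact h x hx
  rw [Matrix.rank, LinearMap.finrank_range_of_inj hinj, Module.finrank_fintype_fun_eq_card]


/-- Lemma 2: rank properties of a minimal block-structured realization. -/
theorem stmt11 {m n1 n2 k : ℕ}
    (G : TF m)
    (A1 : Matrix (Fin n1) (Fin n1) ℝ) (hA1 : IsUnit A1)
    (B1 : Matrix (Fin n1) (Fin m) ℝ) (B2 : Matrix (Fin n2) (Fin m) ℝ)
    (B3a B3b : Matrix (Fin k) (Fin m) ℝ)
    (C1 : Matrix (Fin m) (Fin n1) ℝ) (C2 : Matrix (Fin m) (Fin n2) ℝ)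
    (C3a C3b : Matrix (Fin m) (Fin k) ℝ)
    (A : Matrix (Fin n1 ⊕ (Fin n2 ⊕ (Fin k ⊕ Fin k))) (Fin n1 ⊕ (Fin n2 ⊕ (Fin k ⊕ Fin k))) ℝ)
    (B : Matrix (Fin n1 ⊕ (Fin n2 ⊕ (Fin k ⊕ Fin k))) (Fin m) ℝ)
    (C : Matrix (Fin m) (Fin n1 ⊕ (Fin n2 ⊕ (Fin k ⊕ Fin k))) ℝ)
    (hA : A = Matrix.fromBlocks A1 0 0
        (Matrix.fromBlocks (0 : Matrix (Fin n2) (Fin n2) ℝ) 0 0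
          (Matrix.fromBlocks 0 (1 : Matrix (Fin k) (Fin k) ℝ) 0 0)))
    (hB : B = Matrix.fromRows B1 (Matrix.fromRows B2 (Matrix.fromRows B3a B3b)))
    (hC : C = Matrix.fromCols C1 (Matrix.fromCols C2 (Matrix.fromCols C3a C3b)))
    (hreal : IsRealization G A B C 0) (hmin : Minimal A B C) :
    (Matrix.fromCols C2 C3a).rank = n2 + k ∧
    (Matrix.fromRows B2 B3b).rank = n2 + k ∧
    k + n2 ≤ m ∧
    Controllable A1 B1 ∧ Observable A1 C1 := by
  obtain ⟨hctrb, hobs⟩ := hmin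
  -- Part 1: kernel of [C2 C3a] is trivial
  have hCker : ∀ y : Fin n2 ⊕ Fin k → ℝ, Matrix.fromCols C2 C3a *ᵥ y = 0 → y = 0 := by
    intro y hy
    set x : Fin n1 ⊕ (Fin n2 ⊕ (Fin k ⊕ Fin k)) → ℝ :=
      Sum.elim 0 (Sum.elim (y ∘ Sum.inl) (Sum.elim (y ∘ Sum.inr) 0)) with hxdef
    have hAx : A *ᵥ x = 0 := by
      subst hA
      funext i
      rcases i with i | i | i | i <;>
        simp [hxdef, Matrix.fromBlocks_mulVec, Matrix.mulVec_zero, Matrix.zero_mulVec]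
    have hy' : C2 *ᵥ (y ∘ Sum.inl) + C3a *ᵥ (y ∘ Sum.inr) = 0 := by
      rw [← Matrix.fromCols_mulVec_sumElim, Sum.elim_comp_inl_inr, hy]
    have hx0 : x = 0 := by
      apply hobs
      intro j hj
      cases j with
      | zero =>
        rw [pow_zero, Matrix.mul_one]
        subst hC
        rw [hxdef]
        rw [Matrix.fromCols_mulVec_sumElim, Matrix.fromCols_mulVec_sumElim,
          Matrix.fromCols_mulVec_sumElim]
        simp only [Matrix.mulVec_zero, add_zero, zero_add, ← add_assoc]
        simpa using hy'
      | succ j =>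
        rw [pow_succ, ← Matrix.mul_assoc, ← Matrix.mulVec_mulVec, hAx, Matrix.mulVec_zero]
    funext i
    rcases i with i | i
    · exact congrFun hx0 (Sum.inr (Sum.inl i))
    · exact congrFun hx0 (Sum.inr (Sum.inr (Sum.inl i)))
  -- Part 2: kernel of [B2; B3b]ᵀ is trivial
  have hBker : ∀ y : Fin n2 ⊕ Fin k → ℝ, (Matrix.fromRows B2 B3b)ᵀ *ᵥ y = 0 → y = 0 := by
    intro y hy
    set x : Fin n1 ⊕ (Fin n2 ⊕ (Fin k ⊕ Fin k)) → ℝ :=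
      Sum.elim 0 (Sum.elim (y ∘ Sum.inl) (Sum.elim 0 (y ∘ Sum.inr))) with hxdef
    have hxA : x ᵥ* A = 0 := by
      subst hA
      funext i
      rcases i with i | i | i | i <;>
        simp [hxdef, Matrix.vecMul_fromBlocks, Matrix.vecMul_zero, Matrix.zero_vecMul]
    have hy' : (y ∘ Sum.inl) ᵥ* B2 + (y ∘ Sum.inr) ᵥ* B3b = 0 := by
      rw [← Matrix.sumElim_vecMul_fromRows, ← Matrix.mulVec_transpose, Sum.elim_comp_inl_inr, hy]
    have hx0 : x = 0 := by
      apply hctrb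
      intro j hj
      cases j with
      | zero =>
        rw [pow_zero, Matrix.one_mul]
        subst hB
        rw [hxdef]
        rw [Matrix.sumElim_vecMul_fromRows, Matrix.sumElim_vecMul_fromRows,
          Matrix.sumElim_vecMul_fromRows]
        simp only [Matrix.zero_vecMul, add_zero, zero_add]
        exact hy'
      | succ j =>
        rw [pow_succ', Matrix.mul_assoc, ← Matrix.vecMul_vecMul, hxA, Matrix.zero_vecMul]
    funext i
    rcases i with i | i
    · exact congrFun hx0 (Sum.inr (Sum.inl i))
    · exact congrFun hx0 (Sum.inr (Sum.inr (Sum.inr i)))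
  have hCrank : (Matrix.fromCols C2 C3a).rank = n2 + k := by
    rw [rank_eq_card_of_ker _ hCker]
    simp
  have hBrank : (Matrix.fromRows B2 B3b).rank = n2 + k := by
    rw [← Matrix.rank_transpose, rank_eq_card_of_ker _ hBker]
    simp
  refine ⟨hCrank, hBrank, ?_, ?_, ?_⟩
  · have := (Matrix.fromCols C2 C3a).rank_le_card_height
    rw [hCrank, Fintype.card_fin] at this
    omega
  · -- Controllable A1 B1
    intro x1 hx1
    have hall : ∀ j, x1 ᵥ* (A1 ^ j * B1) = 0 :=
      vecMul_pow_mul_eq_zero A1 B1 x1 (by simpa using hx1)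
    have hx0 : (Sum.elim x1 0 : Fin n1 ⊕ (Fin n2 ⊕ (Fin k ⊕ Fin k)) → ℝ) = 0 := by
      apply hctrb
      intro j hj
      subst hA hB
      rw [fromBlocks_diag_pow, ← Matrix.vecMul_vecMul, Matrix.vecMul_fromBlocks]
      simp only [Sum.elim_comp_inl, Sum.elim_comp_inr, Matrix.vecMul_zero,
        Matrix.zero_vecMul, add_zero, zero_add]
      rw [Matrix.sumElim_vecMul_fromRows, Matrix.zero_vecMul, add_zero,
        Matrix.vecMul_vecMul]
      exact hall j
    funext i
    exact congrFun hx0 (Sum.inl i)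
  · -- Observable A1 C1
    intro x1 hx1
    have hx1' : ∀ j < n1, x1 ᵥ* ((A1ᵀ) ^ j * C1ᵀ) = 0 := by
      intro j hj
      have := hx1 j (by simpa using hj)
      rw [← Matrix.transpose_pow, ← Matrix.transpose_mul, Matrix.vecMul_transpose]
      exact this
    have hall : ∀ j, (C1 * A1 ^ j) *ᵥ x1 = 0 := by
      intro j
      have := vecMul_pow_mul_eq_zero A1ᵀ C1ᵀ x1 hx1' j
      rwa [← Matrix.transpose_pow, ← Matrix.transpose_mul, Matrix.vecMul_transpose] at this
    have hx0 : (Sum.elim x1 0 : Fin n1 ⊕ (Fin n2 ⊕ (Fin k ⊕ Fin k)) → ℝ) = 0 := by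
      apply hobs
      intro j hj
      subst hA hC
      rw [← Matrix.mulVec_mulVec, fromBlocks_diag_pow, Matrix.fromBlocks_mulVec]
      simp only [Sum.elim_comp_inl, Sum.elim_comp_inr, Matrix.mulVec_zero,
        Matrix.zero_mulVec, add_zero, zero_add]
      rw [Matrix.fromCols_mulVec_sumElim, Matrix.mulVec_zero, add_zero,
        Matrix.mulVec_mulVec]
      exact hall j
    funext i
    exact congrFun hx0 (Sum.inl i)


end NIPaper
end
end

section
/- Let A, B ∈ ℂ^{n×n} be complex matrices such that j(A − A*) is positive semidefinite and j(B − B*) is positive definite. Then det(I − AB) ≠ 0. -/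
open Matrix Filter
open scoped Topology ComplexOrder

noncomputable section

namespace NIPaper

/-- Lemma 7: if `j(A - A*) ≥ 0` and `j(B - B*) > 0` then `det(I - AB) ≠ 0`. -/
theorem stmt15 {n : ℕ} (A B : Matrix (Fin n) (Fin n) ℂ)
    (hA : (Complex.I • (A - Aᴴ)).PosSemidef)
    (hB : (Complex.I • (B - Bᴴ)).PosDef) :
    (1 - A * B).det ≠ 0 := by
  intro hdet
  obtain ⟨x, hx, hx0⟩ := (Matrix.exists_mulVec_eq_zero_iff).2 hdet
  set y : Fin n → ℂ := B *ᵥ x with hy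
  have hxAy : A *ᵥ y = x := by
    have := hx0
    rw [Matrix.sub_mulVec, Matrix.one_mulVec, sub_eq_zero] at this
    rw [hy, Matrix.mulVec_mulVec, ← this]
  have key1 : star y ⬝ᵥ (Aᴴ *ᵥ y) = star x ⬝ᵥ y := by
    rw [Matrix.dotProduct_mulVec, ← Matrix.star_mulVec, hxAy]
  have key2 : star x ⬝ᵥ (Bᴴ *ᵥ x) = star y ⬝ᵥ x := by
    rw [Matrix.dotProduct_mulVec, ← Matrix.star_mulVec, hy]
  have q1 : (0 : ℂ) ≤ star y ⬝ᵥ ((Complex.I • (A - Aᴴ)) *ᵥ y) := hA.dotProduct_mulVec_nonneg y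
  have q2 : (0 : ℂ) < star x ⬝ᵥ ((Complex.I • (B - Bᴴ)) *ᵥ x) := hB.dotProduct_mulVec_pos hx
  have hsum : star y ⬝ᵥ ((Complex.I • (A - Aᴴ)) *ᵥ y)
      + star x ⬝ᵥ ((Complex.I • (B - Bᴴ)) *ᵥ x) = 0 := by
    simp only [Matrix.smul_mulVec, Matrix.sub_mulVec, dotProduct_smul,
      dotProduct_sub]
    rw [key1, key2, hxAy]
    simp only [smul_eq_mul]
    ring
  have : (0 : ℂ) < star y ⬝ᵥ ((Complex.I • (A - Aᴴ)) *ᵥ y)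
      + star x ⬝ᵥ ((Complex.I • (B - Bᴴ)) *ᵥ x) := by positivity
  rw [hsum] at this
  exact lt_irrefl 0 this

end NIPaper
end
end

section
/- Suppose the transfer function matrix G(s) = C(sI−A)⁻¹B with minimal block-structured realization is NI, and let R(s) = sG(s). Then: (i) R(jω) + R(jω)* ≥ 0 (positive semidefinite) for all real ω such that jω is not a pole of G(s); (ii) at every pole jω₀ of G(s) with ω₀ > 0, the residue lim_{s→jω₀}(s−jω₀)R(s) = (1/2)F(jω₀) is Hermitian positive semidefinite; and (iii) lim_{s→0} sR(s) = lim_{s→0} s²G(s) ≥ 0. In particular, R(s) is positive real. -/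
open Matrix Filter
open scoped Topology ComplexOrder

noncomputable section

namespace NIPaper

variable {m : ℕ}


lemma eval₂_conj (q : Polynomial ℝ) (s : ℂ) :
    q.eval₂ (algebraMap ℝ ℂ) ((starRingEnd ℂ) s) = (starRingEnd ℂ) (q.eval₂ (algebraMap ℝ ℂ) s) := by
  have h : (starRingEnd ℂ).comp (algebraMap ℝ ℂ) = algebraMap ℝ ℂ :=
    RingHom.ext fun x => Complex.conj_ofReal x
  rw [Polynomial.hom_eval₂, h]

lemma ratEval_conj (f : RatFunc ℝ) (s : ℂ) :
    f.eval (algebraMap ℝ ℂ) ((starRingEnd ℂ) s) = (starRingEnd ℂ) (f.eval (algebraMap ℝ ℂ) s) := by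
  unfold RatFunc.eval
  rw [eval₂_conj, eval₂_conj, map_div₀]

lemma isRoot_conj {q : Polynomial ℝ} {s : ℂ} (h : (q.map (algebraMap ℝ ℂ)).IsRoot s) :
    (q.map (algebraMap ℝ ℂ)).IsRoot ((starRingEnd ℂ) s) := by
  have h' : q.eval₂ (algebraMap ℝ ℂ) s = 0 := by
    rwa [Polynomial.eval₂_eq_eval_map]
  show Polynomial.eval _ _ = 0
  rw [← Polynomial.eval₂_eq_eval_map, eval₂_conj, h', map_zero]

lemma isPoleAt_conj {G : TF m} {s : ℂ} : IsPoleAt G ((starRingEnd ℂ) s) ↔ IsPoleAt G s := by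
  constructor
  · rintro ⟨i, j, h⟩
    exact ⟨i, j, by simpa using isRoot_conj h⟩
  · rintro ⟨i, j, h⟩
    exact ⟨i, j, isRoot_conj h⟩

lemma evalTF_conj (G : TF m) (s : ℂ) :
    evalTF G ((starRingEnd ℂ) s) = (evalTF G s).map (starRingEnd ℂ) :=
  funext fun i => funext fun j => ratEval_conj _ _

lemma finite_poles (G : TF m) : {s : ℂ | IsPoleAt G s}.Finite := by
  have hsub : {s : ℂ | IsPoleAt G s} ⊆
      ⋃ i, ⋃ j, {s : ℂ | ((G i j).denom.map (algebraMap ℝ ℂ)).IsRoot s} := by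
    rintro s ⟨i, j, h⟩
    exact Set.mem_iUnion.2 ⟨i, Set.mem_iUnion.2 ⟨j, h⟩⟩
  refine Set.Finite.subset ?_ hsub
  exact Set.finite_iUnion fun i => Set.finite_iUnion fun j =>
    Polynomial.finite_setOf_isRoot (Polynomial.map_ne_zero (RatFunc.denom_ne_zero _))

lemma eventually_not_pole (G : TF m) (a : ℂ) : ∀ᶠ s in 𝓝[≠] a, ¬ IsPoleAt G s := by
  have hfin : ({s : ℂ | IsPoleAt G s} \ {a}).Finite := (finite_poles G).diff
  have hmem : ({s : ℂ | IsPoleAt G s} \ {a})ᶜ ∈ 𝓝 a :=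
    hfin.isClosed.isOpen_compl.mem_nhds (by simp)
  have h1 : ∀ᶠ s in 𝓝[≠] a, s ∈ ({s : ℂ | IsPoleAt G s} \ {a})ᶜ :=
    eventually_nhdsWithin_of_eventually_nhds hmem
  have h2 : ∀ᶠ s in 𝓝[≠] a, s ≠ a := eventually_mem_nhdsWithin
  filter_upwards [h1, h2] with s hs hne hpole
  exact hs ⟨hpole, hne⟩

lemma tendsto_ratEval {f : RatFunc ℝ} {s₀ : ℂ}
    (h : ¬ (f.denom.map (algebraMap ℝ ℂ)).IsRoot s₀) :
    Tendsto (fun s => f.eval (algebraMap ℝ ℂ) s) (𝓝 s₀) (𝓝 (f.eval (algebraMap ℝ ℂ) s₀)) := by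
  unfold RatFunc.eval
  simp only [Polynomial.eval₂_eq_eval_map]
  exact Tendsto.div ((f.num.map _).continuous.tendsto s₀)
    ((f.denom.map _).continuous.tendsto s₀) h

lemma tendsto_evalTF {G : TF m} {s₀ : ℂ} (h : ¬ IsPoleAt G s₀) :
    Tendsto (fun s => evalTF G s) (𝓝 s₀) (𝓝 (evalTF G s₀)) := by
  refine tendsto_pi_nhds.2 ?_
  intro i
  rw [tendsto_pi_nhds]
  intro j
  exact tendsto_ratEval fun hr => h ⟨i, j, hr⟩

lemma posSemidef_of_tendsto {α : Type*} {l : Filter α} [l.NeBot]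
    {F : α → Matrix (Fin m) (Fin m) ℂ} {M : Matrix (Fin m) (Fin m) ℂ}
    (hF : Tendsto F l (𝓝 M)) (h : ∀ᶠ x in l, (F x).PosSemidef) : M.PosSemidef := by
  refine Matrix.posSemidef_iff_dotProduct_mulVec.mpr ⟨?_, ?_⟩
  · have hct : Continuous fun N : Matrix (Fin m) (Fin m) ℂ => Nᴴ :=
      continuous_id.matrix_conjTranspose
    have h1 : Tendsto (fun x => (F x)ᴴ) l (𝓝 Mᴴ) := (hct.tendsto M).comp hF
    have h2 : Tendsto (fun x => (F x)ᴴ) l (𝓝 M) :=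
      hF.congr' (h.mono fun x hx => hx.1.symm)
    exact tendsto_nhds_unique h1 h2
  · intro x
    have hct : Continuous fun N : Matrix (Fin m) (Fin m) ℂ => star x ⬝ᵥ N *ᵥ x :=
      continuous_const.dotProduct (continuous_id.matrix_mulVec continuous_const)
    have hq : Tendsto (fun a => star x ⬝ᵥ (F a) *ᵥ x) l (𝓝 (star x ⬝ᵥ M *ᵥ x)) :=
      (hct.tendsto M).comp hF
    exact ge_of_tendsto hq (h.mono fun a ha => ha.dotProduct_mulVec_nonneg x)

lemma psd_smulReal {M : Matrix (Fin m) (Fin m) ℂ} (hM : M.PosSemidef) {c : ℝ} (hc : 0 ≤ c) :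
    ((c : ℂ) • M).PosSemidef := by
  refine Matrix.posSemidef_iff_dotProduct_mulVec.mpr ⟨?_, ?_⟩
  · show ((c : ℂ) • M)ᴴ = (c : ℂ) • M
    rw [Matrix.conjTranspose_smul, hM.1.eq]
    congr 1
    simp [Complex.conj_ofReal]
  · intro x
    rw [Matrix.smul_mulVec, dotProduct_smul, smul_eq_mul]
    exact mul_nonneg (Complex.zero_le_real.mpr hc) (hM.dotProduct_mulVec_nonneg x)

lemma psd_mapConj {K : Matrix (Fin m) (Fin m) ℂ} (h : K.PosSemidef) :
    (K.map (starRingEnd ℂ)).PosSemidef := by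
  have he : K.map (starRingEnd ℂ) = Kᵀ := by
    ext i j
    have h2 : Kᴴ j i = K j i := by rw [h.1.eq]
    rw [Matrix.conjTranspose_apply] at h2
    simpa [Matrix.map_apply] using h2
  rw [he]
  exact h.transpose

lemma evalTF_XG {G : TF m} {s : ℂ} (h : ¬ IsPoleAt G s) :
    evalTF (Matrix.of fun i j => (RatFunc.X : RatFunc ℝ) * G i j) s = s • evalTF G s := by
  ext i j
  show (RatFunc.X * G i j).eval (algebraMap ℝ ℂ) s = (s • evalTF G s) i j
  rw [RatFunc.eval_mul, RatFunc.eval_X]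
  · rfl
  · rw [RatFunc.denom_X]; simp
  · intro hz
    exact h ⟨i, j, by rwa [Polynomial.IsRoot, ← Polynomial.eval₂_eq_eval_map]⟩

lemma poleR_sub {G : TF m} {s : ℂ}
    (h : IsPoleAt (Matrix.of fun i j => (RatFunc.X : RatFunc ℝ) * G i j) s) : IsPoleAt G s := by
  obtain ⟨i, j, hr⟩ := h
  refine ⟨i, j, ?_⟩
  have hdvd : ((RatFunc.X : RatFunc ℝ) * G i j).denom ∣ (G i j).denom := by
    have := RatFunc.denom_mul_dvd (RatFunc.X : RatFunc ℝ) (G i j)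
    rwa [RatFunc.denom_X, one_mul] at this
  obtain ⟨r, hr2⟩ := hdvd
  show Polynomial.eval _ _ = 0
  rw [hr2, Polynomial.map_mul, Polynomial.eval_mul]
  simp only [Matrix.of_apply] at hr
  rw [hr, zero_mul]


/-- From the proof of Lemma 4: `R(s) = s G(s)` is positive real when `G` is NI with a
minimal block-structured realization. -/
theorem stmt18 {m n1 n2 k : ℕ}
    (G : TF m)
    (A1 : Matrix (Fin n1) (Fin n1) ℝ) (hA1 : IsUnit A1)
    (B1 : Matrix (Fin n1) (Fin m) ℝ) (B2 : Matrix (Fin n2) (Fin m) ℝ)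
    (B3a B3b : Matrix (Fin k) (Fin m) ℝ)
    (C1 : Matrix (Fin m) (Fin n1) ℝ) (C2 : Matrix (Fin m) (Fin n2) ℝ)
    (C3a C3b : Matrix (Fin m) (Fin k) ℝ)
    (A : Matrix (Fin n1 ⊕ (Fin n2 ⊕ (Fin k ⊕ Fin k))) (Fin n1 ⊕ (Fin n2 ⊕ (Fin k ⊕ Fin k))) ℝ)
    (B : Matrix (Fin n1 ⊕ (Fin n2 ⊕ (Fin k ⊕ Fin k))) (Fin m) ℝ)
    (C : Matrix (Fin m) (Fin n1 ⊕ (Fin n2 ⊕ (Fin k ⊕ Fin k))) ℝ)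
    (hA : A = Matrix.fromBlocks A1 0 0
        (Matrix.fromBlocks (0 : Matrix (Fin n2) (Fin n2) ℝ) 0 0
          (Matrix.fromBlocks 0 (1 : Matrix (Fin k) (Fin k) ℝ) 0 0)))
    (hB : B = Matrix.fromRows B1 (Matrix.fromRows B2 (Matrix.fromRows B3a B3b)))
    (hC : C = Matrix.fromCols C1 (Matrix.fromCols C2 (Matrix.fromCols C3a C3b)))
    (hreal : IsRealization G A B C 0) (hmin : Minimal A B C) (hNI : IsNI G) :
    (∀ ω : ℝ, ¬ IsPoleAt G (Complex.I * ω) →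
      ((Complex.I * (ω : ℂ)) • evalTF G (Complex.I * ω)
        + ((Complex.I * (ω : ℂ)) • evalTF G (Complex.I * ω))ᴴ).PosSemidef) ∧
    (∀ ω : ℝ, 0 < ω → IsPoleAt G (Complex.I * ω) →
      ∃ K : Matrix (Fin m) (Fin m) ℂ,
        Tendsto (fun s : ℂ => (s - Complex.I * ω) • s • evalTF G s)
          (𝓝[≠] (Complex.I * (ω : ℂ))) (𝓝 K) ∧ K.PosSemidef) ∧
    (∃ K : Matrix (Fin m) (Fin m) ℂ,
      Tendsto (fun s : ℂ => s • s • evalTF G s) (𝓝[≠] (0 : ℂ)) (𝓝 K) ∧ K.PosSemidef) ∧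
    IsPR (Matrix.of fun i j => (RatFunc.X : RatFunc ℝ) * G i j) := by
  classical
  obtain ⟨hNI1, hNI2, hNI3, hNI4⟩ := hNI
  clear hA hB hC hreal hmin hA1
  have part1 : ∀ ω : ℝ, ¬ IsPoleAt G (Complex.I * ω) →
      ((Complex.I * (ω : ℂ)) • evalTF G (Complex.I * ω)
        + ((Complex.I * (ω : ℂ)) • evalTF G (Complex.I * ω))ᴴ).PosSemidef := by
    intro ω hp
    rcases lt_trichotomy ω 0 with hω | hω | hω
    · have hω' : 0 < -ω := by linarith
      have hconj1 : (starRingEnd ℂ) (Complex.I * (ω : ℂ)) = Complex.I * ((-ω : ℝ) : ℂ) := by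
        simp only [_root_.map_mul, map_neg, Complex.conj_I, Complex.conj_ofReal, Complex.ofReal_neg]
        ring
      have hconj2 : (starRingEnd ℂ) (Complex.I * ((-ω : ℝ) : ℂ)) = Complex.I * (ω : ℂ) := by
        simp only [_root_.map_mul, map_neg, Complex.conj_I, Complex.conj_ofReal, Complex.ofReal_neg]
        ring
      have hp' : ¬ IsPoleAt G (Complex.I * ((-ω : ℝ) : ℂ)) := by
        rw [← hconj1]
        exact fun hh => hp (isPoleAt_conj.mp hh)
      have hpsd := hNI2 (-ω) hω' hp'
      have hE : evalTF G (Complex.I * (ω : ℂ))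
          = (evalTF G (Complex.I * ((-ω : ℝ) : ℂ))).map (starRingEnd ℂ) := by
        rw [← evalTF_conj, hconj2]
      have key : (Complex.I * (ω : ℂ)) • evalTF G (Complex.I * ω)
            + ((Complex.I * (ω : ℂ)) • evalTF G (Complex.I * ω))ᴴ
          = (((-ω : ℝ) : ℂ) • (Complex.I • (evalTF G (Complex.I * ((-ω : ℝ) : ℂ))
              - (evalTF G (Complex.I * ((-ω : ℝ) : ℂ)))ᴴ)))ᵀ := by
        rw [hE]
        ext i j
        simp only [Matrix.add_apply, Matrix.smul_apply, Matrix.conjTranspose_apply,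
          Matrix.transpose_apply, Matrix.sub_apply, Matrix.map_apply, smul_eq_mul,
          star_mul', Complex.star_def, _root_.map_mul, Complex.conj_I, Complex.conj_ofReal,
          Complex.ofReal_neg, Complex.conj_conj]
        ring
      rw [key]
      exact (psd_smulReal hpsd hω'.le).transpose
    · subst hω
      simp only [Complex.ofReal_zero, mul_zero, zero_smul, Matrix.conjTranspose_zero, add_zero]
      exact Matrix.PosSemidef.zero
    · have hpsd := hNI2 ω hω hp
      have key : (Complex.I * (ω : ℂ)) • evalTF G (Complex.I * ω)
            + ((Complex.I * (ω : ℂ)) • evalTF G (Complex.I * ω))ᴴ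
          = ((ω : ℝ) : ℂ) • (Complex.I • (evalTF G (Complex.I * ω) - (evalTF G (Complex.I * ω))ᴴ)) := by
        ext i j
        simp only [Matrix.add_apply, Matrix.smul_apply, Matrix.conjTranspose_apply,
          Matrix.sub_apply, smul_eq_mul, star_mul', Complex.star_def, _root_.map_mul,
          Complex.conj_I, Complex.conj_ofReal]
        ring
      rw [key]
      exact psd_smulReal hpsd hω.le
  have part2 : ∀ ω : ℝ, 0 < ω → IsPoleAt G (Complex.I * ω) →
      ∃ K : Matrix (Fin m) (Fin m) ℂ,
        Tendsto (fun s : ℂ => (s - Complex.I * ω) • s • evalTF G s)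
          (𝓝[≠] (Complex.I * (ω : ℂ))) (𝓝 K) ∧ K.PosSemidef := by
    intro ω hω hp
    obtain ⟨-, K, hK, hKpsd⟩ := hNI3 ω hω hp
    refine ⟨((ω : ℝ) : ℂ) • K, ?_, psd_smulReal hKpsd hω.le⟩
    have hsc : Tendsto (fun s : ℂ => -Complex.I * s) (𝓝[≠] (Complex.I * (ω : ℂ)))
        (𝓝 ((ω : ℂ))) := by
      have h1 : Tendsto (fun s : ℂ => -Complex.I * s) (𝓝 (Complex.I * (ω : ℂ)))
          (𝓝 (-Complex.I * (Complex.I * (ω : ℂ)))) :=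
        (continuous_const.mul continuous_id).tendsto _
      have h2 : -Complex.I * (Complex.I * (ω : ℂ)) = (ω : ℂ) := by
        have := Complex.I_mul_I
        linear_combination (-(ω : ℂ)) * Complex.I_sq
      rw [h2] at h1
      exact h1.mono_left nhdsWithin_le_nhds
    have hmain := hsc.smul hK
    refine Tendsto.congr (fun s => ?_) hmain
    simp only [smul_smul]
    congr 1
    linear_combination (-(s * (s - Complex.I * (ω : ℂ)))) * Complex.I_sq
  have part3 : ∃ K : Matrix (Fin m) (Fin m) ℂ,
      Tendsto (fun s : ℂ => s • s • evalTF G s) (𝓝[≠] (0 : ℂ)) (𝓝 K) ∧ K.PosSemidef := by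
    by_cases hp : IsPoleAt G 0
    · obtain ⟨-, K, hK, hKpsd⟩ := hNI4 hp
      exact ⟨K, Tendsto.congr (fun s => by rw [sq, ← smul_smul]) hK, hKpsd⟩
    · have h0 : Tendsto (fun s : ℂ => s • s • evalTF G s) (𝓝 (0 : ℂ))
          (𝓝 ((0 : ℂ) • (0 : ℂ) • evalTF G 0)) :=
        tendsto_id.smul (tendsto_id.smul (tendsto_evalTF hp))
      refine ⟨0, ?_, Matrix.PosSemidef.zero⟩
      simpa using h0.mono_left nhdsWithin_le_nhds
  refine ⟨part1, part2, part3, ?_, ?_, ?_⟩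
  · intro s hs hpole
    exact hNI1 s hs (poleR_sub hpole)
  · intro ω hpR
    by_cases hpG : IsPoleAt G (Complex.I * ω)
    · have hcontR := tendsto_evalTF hpR
      have hline : Tendsto (fun t : ℝ => (Complex.I * (t : ℂ))) (𝓝 ω) (𝓝 (Complex.I * (ω : ℂ))) :=
        (continuous_const.mul Complex.continuous_ofReal).tendsto ω
      have h1 : Tendsto (fun t : ℝ =>
            evalTF (Matrix.of fun i j => (RatFunc.X : RatFunc ℝ) * G i j) (Complex.I * (t : ℂ)))
          (𝓝 ω)
          (𝓝 (evalTF (Matrix.of fun i j => (RatFunc.X : RatFunc ℝ) * G i j) (Complex.I * ω))) :=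
        hcontR.comp hline
      have hconjt := ((continuous_id.matrix_conjTranspose).tendsto
        (evalTF (Matrix.of fun i j => (RatFunc.X : RatFunc ℝ) * G i j) (Complex.I * ω))).comp h1
      have h2 := (h1.add hconjt).mono_left (nhdsWithin_le_nhds (s := {ω}ᶜ))
      have hfin : {t : ℝ | IsPoleAt G (Complex.I * t)}.Finite := by
        have hinj : Set.InjOn (fun t : ℝ => (Complex.I * (t : ℂ)))
            {t : ℝ | IsPoleAt G (Complex.I * t)} := by
          intro a _ b _ hab
          have := mul_left_cancel₀ Complex.I_ne_zero hab
          exact_mod_cast this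
        refine Set.Finite.of_finite_image ?_ hinj
        refine Set.Finite.subset (finite_poles G) ?_
        rintro z ⟨t, ht, rfl⟩
        exact ht
      have hev : ∀ᶠ t : ℝ in 𝓝[≠] ω, ¬ IsPoleAt G (Complex.I * (t : ℂ)) := by
        have hfin2 : ({t : ℝ | IsPoleAt G (Complex.I * t)} \ {ω}).Finite := hfin.diff
        have hmem : ({t : ℝ | IsPoleAt G (Complex.I * t)} \ {ω})ᶜ ∈ 𝓝 ω :=
          hfin2.isClosed.isOpen_compl.mem_nhds (by simp)
        have ha : ∀ᶠ t in 𝓝[≠] ω, t ∈ ({t : ℝ | IsPoleAt G (Complex.I * t)} \ {ω})ᶜ :=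
          eventually_nhdsWithin_of_eventually_nhds hmem
        have hb : ∀ᶠ t in 𝓝[≠] ω, t ≠ ω := eventually_mem_nhdsWithin
        filter_upwards [ha, hb] with t h1' h2' hpol
        exact h1' ⟨hpol, h2'⟩
      refine posSemidef_of_tendsto h2 (hev.mono fun t ht => ?_)
      have := part1 t ht
      rwa [← evalTF_XG ht] at this
    · have hXG := evalTF_XG (G := G) (s := Complex.I * ω) hpG
      rw [hXG]
      exact part1 ω hpG
  · intro ω hpR
    have hpG : IsPoleAt G (Complex.I * ω) := poleR_sub hpR
    have heq : ∀ᶠ s in 𝓝[≠] (Complex.I * (ω : ℂ)),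
        evalTF (Matrix.of fun i j => (RatFunc.X : RatFunc ℝ) * G i j) s = s • evalTF G s :=
      (eventually_not_pole G _).mono fun s hs => evalTF_XG hs
    rcases lt_trichotomy ω 0 with hω | hω | hω
    · have hω' : 0 < -ω := by linarith
      have hconj1 : (starRingEnd ℂ) (Complex.I * (ω : ℂ)) = Complex.I * ((-ω : ℝ) : ℂ) := by
        simp only [_root_.map_mul, map_neg, Complex.conj_I, Complex.conj_ofReal, Complex.ofReal_neg]
        ring
      have hconj2 : (starRingEnd ℂ) (Complex.I * ((-ω : ℝ) : ℂ)) = Complex.I * (ω : ℂ) := by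
        simp only [_root_.map_mul, map_neg, Complex.conj_I, Complex.conj_ofReal, Complex.ofReal_neg]
        ring
      have hpG' : IsPoleAt G (Complex.I * ((-ω : ℝ) : ℂ)) := by
        rw [← hconj1]
        exact isPoleAt_conj.mpr hpG
      obtain ⟨K, hK, hKpsd⟩ := part2 (-ω) hω' hpG'
      refine ⟨K.map (starRingEnd ℂ), ?_, psd_mapConj hKpsd⟩
      have hmaps : Set.MapsTo (starRingEnd ℂ) {(Complex.I * (ω : ℂ))}ᶜ
          {(Complex.I * ((-ω : ℝ) : ℂ))}ᶜ := by
        intro s hs hmem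
        apply hs
        simp only [Set.mem_singleton_iff] at hmem ⊢
        have h' := congrArg (starRingEnd ℂ) hmem
        rwa [Complex.conj_conj, hconj2] at h'
      have hc : Tendsto (starRingEnd ℂ) (𝓝[≠] (Complex.I * (ω : ℂ)))
          (𝓝[≠] (Complex.I * ((-ω : ℝ) : ℂ))) := by
        have h' := (Complex.continuous_conj.continuousWithinAt
          (s := {(Complex.I * (ω : ℂ))}ᶜ) (x := Complex.I * (ω : ℂ))).tendsto_nhdsWithin hmaps
        rwa [hconj1] at h'
      have hcomp := hK.comp hc
      have hmap := ((continuous_id.matrix_map Complex.continuous_conj).tendsto K).comp hcomp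
      have hkeyeq : ∀ s : ℂ,
          ((((starRingEnd ℂ) s - Complex.I * ((-ω : ℝ) : ℂ)) • ((starRingEnd ℂ) s) •
            evalTF G ((starRingEnd ℂ) s)).map (starRingEnd ℂ))
          = (s - Complex.I * (ω : ℂ)) • s • evalTF G s := by
        intro s
        rw [evalTF_conj]
        ext i j
        simp only [Matrix.map_apply, Matrix.smul_apply, smul_eq_mul, _root_.map_mul, map_sub,
          map_neg, Complex.conj_conj, Complex.conj_I, Complex.conj_ofReal, Complex.ofReal_neg]
        ring
      have hfinal : Tendsto (fun s : ℂ => (s - Complex.I * (ω : ℂ)) • s • evalTF G s)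
          (𝓝[≠] (Complex.I * (ω : ℂ))) (𝓝 (K.map (starRingEnd ℂ))) :=
        Tendsto.congr (fun s => hkeyeq s) hmap
      exact hfinal.congr' (heq.mono fun s hs => by simp only [hs])
    · subst hω
      obtain ⟨K, hK, hKpsd⟩ := part3
      refine ⟨K, ?_, hKpsd⟩
      simp only [Complex.ofReal_zero, mul_zero, sub_zero] at heq ⊢
      exact (hK.congr' (heq.mono fun s hs => by simp only [hs]))
    · obtain ⟨K, hK, hKpsd⟩ := part2 ω hω hpG
      exact ⟨K, hK.congr' (heq.mono fun s hs => by simp only [hs]), hKpsd⟩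

end NIPaper
end
end
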